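/- Let K be a compact Hausdorff space, φ : K → K a continuous surjection, w ∈ C(K), λ ∈ ℂ, and T = w·T_φ. Suppose (k_n)_{n∈ℤ} is a φ-string with all k_n distinct such that Σ_{n=1}^∞ |λ|^n/|w_n(k_{-n})| < ∞ and Σ_{n=0}^∞ |w_n(k_0)|/|λ|^n < ∞ (with w_n(k_{-n}) ≠ 0 for all n, λ ≠ 0). Then the measure μ = Σ_{n=1}^∞ (λ^n / w_n(k_{-n})) δ_{k_{-n}} + Σ_{n=0}^∞ (w_n(k_0)/λ^n) δ_{k_n} is a well-defined element of C(K)' satisfying T'μ = λμ. -/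

import Mathlib

/-- `wn φ w n x = w(x)·w(φ(x))⋯w(φ^{n-1}(x))`, with `wn φ w 0 = 1`. -/
noncomputable def wn {K : Type*} [TopologicalSpace K] (φ : K → K) (w : C(K, ℂ)) (n : ℕ) (x : K) : ℂ :=
  ∏ i ∈ Finset.range n, w (φ^[i] x)

lemma wn_zero {K : Type*} [TopologicalSpace K] (φ : K → K) (w : C(K, ℂ)) (x : K) :
    wn φ w 0 x = 1 := by simp [wn]

lemma wn_succ {K : Type*} [TopologicalSpace K] (φ : K → K) (w : C(K, ℂ)) (n : ℕ) (x : K) :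
    wn φ w (n + 1) x = wn φ w n x * w (φ^[n] x) := by
  simp [wn, Finset.prod_range_succ]

lemma wn_succ' {K : Type*} [TopologicalSpace K] (φ : K → K) (w : C(K, ℂ)) (n : ℕ) (x : K) :
    wn φ w (n + 1) x = w x * wn φ w n (φ x) := by
  rw [wn, Finset.prod_range_succ']
  simp [wn, mul_comm, Function.iterate_succ_apply]

set_option maxHeartbeats 1000000 in
set_option synthInstance.maxHeartbeats 400000 in
/-- Given a `φ`-string `(k_n)_{n∈ℤ}` of distinct points with
`Σ |λ|^n/|w_n(k_{-n})| < ∞` and `Σ |w_n(k_0)|/|λ|^n < ∞`, the measure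
`μ = Σ_{n≥1} (λ^n/w_n(k_{-n})) δ_{k_{-n}} + Σ_{n≥0} (w_n(k_0)/λ^n) δ_{k_n}`
is a well-defined element of `C(K)'` with `T'μ = λμ`. -/
theorem stmt13 {K : Type*} [TopologicalSpace K] [CompactSpace K] [T2Space K]
    (φ : K → K) (hφc : Continuous φ) (hφs : Function.Surjective φ)
    (w : C(K, ℂ)) (lam : ℂ) (hlam : lam ≠ 0)
    (T : C(K, ℂ) →L[ℂ] C(K, ℂ))
    (hT : ∀ (f : C(K, ℂ)) (x : K), T f x = w x * f (φ x))
    (k : ℤ → K) (hstring : ∀ n : ℤ, φ (k n) = k (n + 1))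
    (hinj : Function.Injective k)
    (hwnz : ∀ n : ℕ, wn φ w n (k (-(n : ℤ))) ≠ 0)
    (hsum1 : Summable (fun n : ℕ =>
      ‖lam‖ ^ n / ‖wn φ w n (k (-(n : ℤ)))‖))
    (hsum2 : Summable (fun n : ℕ =>
      ‖wn φ w n (k 0)‖ / ‖lam‖ ^ n)) :
    ∃ μ : C(K, ℂ) →L[ℂ] ℂ,
      HasSum (fun n : ℤ =>
        (if 0 ≤ n then wn φ w n.toNat (k 0) / lam ^ n.toNat
          else lam ^ (-n).toNat / wn φ w (-n).toNat (k n)) •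
          ContinuousMap.evalCLM ℂ (k n)) μ ∧
      μ.comp T = lam • μ := by
  -- coefficients
  set c : ℤ → ℂ := fun n =>
    if 0 ≤ n then wn φ w n.toNat (k 0) / lam ^ n.toNat
    else lam ^ (-n).toNat / wn φ w (-n).toNat (k n) with hc
  set F : ℤ → (C(K, ℂ) →L[ℂ] ℂ) := fun n => c n • ContinuousMap.evalCLM ℂ (k n) with hF
  -- iterates along the string
  have h_iter : ∀ (n : ℤ) (m : ℕ), φ^[m] (k n) = k (n + m) := by
    intro n m
    induction m with
    | zero => simp
    | succ m ih =>
      rw [Function.iterate_succ_apply', ih, hstring]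
      congr 1
      push_cast
      ring
  -- key coefficient identity
  have hkey : ∀ n : ℤ, c n * w (k n) = lam * c (n + 1) := by
    intro n
    rcases le_or_gt 0 n with hn | hn
    · have hn1 : (0:ℤ) ≤ n + 1 := by omega
      have htn : (n + 1).toNat = n.toNat + 1 := by omega
      have hk : k n = φ^[n.toNat] (k 0) := by
        rw [h_iter 0 n.toNat]; simp [Int.toNat_of_nonneg hn]
      simp only [hc, if_pos hn, if_pos hn1, htn]
      rw [hk, div_mul_eq_mul_div, ← wn_succ]
      rw [pow_succ]
      field_simp
    · -- n < 0
      have hm : (-n).toNat = ((-(n+1)).toNat) + 1 := by omega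
      set p : ℕ := (-(n+1)).toNat with hp
      have hkn : k (-((p:ℤ) + 1)) = k n := by congr 1; omega
      have hnz : wn φ w (p + 1) (k n) ≠ 0 := by
        have := hwnz (p + 1)
        push_cast at this
        rwa [hkn] at this
      have hsplit : wn φ w (p + 1) (k n) = w (k n) * wn φ w p (k (n + 1)) := by
        rw [wn_succ', hstring]
      have hwne : w (k n) ≠ 0 := by
        intro h; apply hnz; rw [hsplit, h, zero_mul]
      have hpne : wn φ w p (k (n + 1)) ≠ 0 := by
        intro h; apply hnz; rw [hsplit, h, mul_zero]
      have hc1 : c (n + 1) = lam ^ p / wn φ w p (k (n + 1)) := by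
        rcases eq_or_lt_of_le (show n + 1 ≤ 0 by omega) with h0 | h0
        · have hp0 : p = 0 := by omega
          have : n + 1 = 0 := h0
          simp [hc, this, hp0, wn_zero]
        · have : ¬ (0:ℤ) ≤ n + 1 := by omega
          simp only [hc, if_neg this]
          rw [hp]
      have hnneg : ¬ (0:ℤ) ≤ n := by omega
      rw [hc1]
      simp only [hc, if_neg hnneg]
      rw [hm, hsplit, pow_succ]
      field_simp
  -- summability of norms
  have hnormc : Summable (fun n : ℤ => ‖c n‖) := by
    apply Summable.of_nat_of_neg
    · apply hsum2.congr
      intro n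
      have : (0:ℤ) ≤ (n:ℤ) := Int.natCast_nonneg n
      simp [hc, this, norm_div, norm_pow]
    · apply hsum1.congr
      intro n
      rcases Nat.eq_zero_or_pos n with h0 | h0
      · simp [hc, h0, wn_zero]
      · have : ¬ (0:ℤ) ≤ -(n:ℤ) := by omega
        simp [hc, this, norm_div, norm_pow, h0.ne']
  have hFnorm : ∀ n : ℤ, ‖F n‖ ≤ ‖c n‖ := by
    intro n
    rw [hF]
    have he : ‖ContinuousMap.evalCLM (M := ℂ) ℂ (k n)‖ ≤ 1 := by
      apply ContinuousLinearMap.opNorm_le_bound _ zero_le_one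
      intro f
      rw [one_mul]
      exact f.norm_coe_le_norm (k n)
    calc ‖c n • ContinuousMap.evalCLM ℂ (k n)‖ ≤ ‖c n‖ * ‖ContinuousMap.evalCLM (M := ℂ) ℂ (k n)‖ :=
          norm_smul_le _ _
      _ ≤ ‖c n‖ * 1 := mul_le_mul_of_nonneg_left he (norm_nonneg _)
      _ = ‖c n‖ := mul_one _
  have hFs : Summable F := Summable.of_norm_bounded hnormc hFnorm
  have hμ := hFs.hasSum
  refine ⟨∑' n, F n, hμ, ?_⟩
  set μ := ∑' n, F n
  -- composition identity
  have hcomp : ∀ n : ℤ, (F n).comp T = lam • F (n + 1) := by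
    intro n
    ext f
    simp only [hF, ContinuousLinearMap.comp_apply, ContinuousLinearMap.smul_apply,
      smul_eq_mul]
    have : (ContinuousMap.evalCLM ℂ (k n)) (T f) = T f (k n) := rfl
    rw [this, hT f (k n), hstring]
    have h2 : (ContinuousMap.evalCLM ℂ (k (n+1))) f = f (k (n+1)) := rfl
    rw [h2]
    have := hkey n
    calc c n * (w (k n) * f (k (n + 1))) = (c n * w (k n)) * f (k (n + 1)) := by ring
      _ = (lam * c (n + 1)) * f (k (n + 1)) := by rw [this]
      _ = lam * (c (n + 1) * f (k (n + 1))) := by ring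
  -- shift the sum
  have hshift : HasSum (fun n : ℤ => F (n + 1)) μ :=
    (Equiv.addRight (1:ℤ)).hasSum_iff.mpr hμ
  have h1 : HasSum (fun n : ℤ => lam • F (n + 1)) (lam • μ) := hshift.const_smul lam
  have h2 : HasSum (fun n : ℤ => (F n).comp T) (μ.comp T) := by
    have := ((ContinuousLinearMap.compL ℂ C(K,ℂ) C(K,ℂ) ℂ).flip T).hasSum hμ
    exact this
  simp_rw [hcomp] at h2
  exact h2.unique h1
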